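/- Let (xⁿ)_{n≥0} be a real sequence satisfying the three-term recursion inequality 3x^{n+1} - 4xⁿ + x^{n-1} ≤ g^{n+1} for all n ≥ 1. Then there exist constants c₀ and c₁ depending only on x⁰ and x¹ such that for all N ≥ 2, x^N ≤ c₀ + c₁/3^N + Σ_{j=2}^{N} 3^{-(N+1-j)} Σ_{k=2}^{j} g^k. -/
import Mathlib


open Finset

/-- Guermond–Salgado three-term recursion lemma: if
`3x^{n+1} - 4xⁿ + x^{n-1} ≤ g^{n+1}` for all `n ≥ 1`, then there exist constants
`c₀, c₁` (depending only on `x⁰` and `x¹`) such that for all `N ≥ 2`,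
`x^N ≤ c₀ + c₁/3^N + Σ_{j=2}^{N} 3^{-(N+1-j)} Σ_{k=2}^{j} g^k`. -/
theorem three_term_recursion (x g : ℕ → ℝ)
    (h : ∀ n : ℕ, 1 ≤ n → 3 * x (n + 1) - 4 * x n + x (n - 1) ≤ g (n + 1)) :
    ∃ c₀ c₁ : ℝ, ∀ N : ℕ, 2 ≤ N →
      x N ≤ c₀ + c₁ / 3 ^ N
        + ∑ j ∈ Finset.Icc 2 N, (1 / 3 ^ (N + 1 - j)) * ∑ k ∈ Finset.Icc 2 j, g k := by
  set d1 : ℝ := x 1 - x 0 with hd1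
  set S : ℕ → ℝ := fun j => ∑ k ∈ Finset.Icc 2 j, g k with hS
  set U : ℕ → ℝ := fun n => ∑ k ∈ Finset.Icc 2 n, (3:ℝ) ^ k * g k with hU
  set W : ℕ → ℝ := fun n => ∑ j ∈ Finset.Icc 2 n, (3:ℝ) ^ j * S j with hW
  have hpow : ∀ n : ℕ, (0:ℝ) < 3 ^ n := fun n => by positivity
  have hSsucc : ∀ n : ℕ, 1 ≤ n → S (n + 1) = S n + g (n + 1) := by
    intro n hn
    simp only [hS]
    rw [Finset.sum_Icc_succ_top (by omega)]
  have hUsucc : ∀ n : ℕ, 1 ≤ n → U (n + 1) = U n + 3 ^ (n + 1) * g (n + 1) := by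
    intro n hn
    simp only [hU]
    rw [Finset.sum_Icc_succ_top (by omega)]
  have hWsucc : ∀ n : ℕ, 1 ≤ n → W (n + 1) = W n + 3 ^ (n + 1) * S (n + 1) := by
    intro n hn
    simp only [hW]
    rw [Finset.sum_Icc_succ_top (by omega)]
  have hS1 : S 1 = 0 := by simp [hS]
  have hU1 : U 1 = 0 := by simp [hU]
  have hW1 : W 1 = 0 := by simp [hW]
  -- key algebraic identity
  have hE : ∀ N : ℕ, 1 ≤ N → U (N + 1) = 3 ^ (N + 1) * S (N + 1) - 2 * W N := by
    intro N hN
    induction N, hN using Nat.le_induction with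
    | base =>
      rw [hUsucc 1 le_rfl, hSsucc 1 le_rfl, hU1, hS1, hW1]
      ring
    | succ n hn ih =>
      rw [hUsucc (n + 1) (by omega), ih, hWsucc n hn, hSsucc (n + 1) (by omega)]
      ring
  -- increment bound
  have hA : ∀ n : ℕ, 1 ≤ n → x n - x (n - 1) ≤ 3 * d1 / 3 ^ n + U n / 3 ^ (n + 1) := by
    intro n hn
    induction n, hn using Nat.le_induction with
    | base =>
      simp only [show (1:ℕ) - 1 = 0 from rfl, hU1, hd1]
      norm_num
    | succ n hn ih =>
      have hrec := h n hn
      have hstep : x (n + 1) - x n ≤ (x n - x (n - 1)) / 3 + g (n + 1) / 3 := by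
        linarith
      have : x (n + 1) - x n ≤ (3 * d1 / 3 ^ n + U n / 3 ^ (n + 1)) / 3 + g (n + 1) / 3 := by
        have := ih
        linarith
      simp only [Nat.add_sub_cancel]
      calc x (n + 1) - x n ≤ (3 * d1 / 3 ^ n + U n / 3 ^ (n + 1)) / 3 + g (n + 1) / 3 := this
        _ = 3 * d1 / 3 ^ (n + 1) + U (n + 1) / 3 ^ (n + 1 + 1) := by
            rw [hUsucc n hn]
            have h1 := (hpow n).ne'
            have h2 := (hpow (n + 1)).ne'
            have h3 := (hpow (n + 2)).ne'
            field_simp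
            ring
  -- main bound
  refine ⟨x 1 + d1 / 2, -(3 / 2) * d1, ?_⟩
  have hP : ∀ N : ℕ, 2 ≤ N →
      x N ≤ (x 1 + d1 / 2) + (-(3 / 2) * d1) / 3 ^ N + W N / 3 ^ (N + 1) := by
    intro N hN
    induction N, hN using Nat.le_induction with
    | base =>
      have hA2 := hA 2 (by omega)
      have hU2 : U 2 = 9 * g 2 := by
        rw [show (2:ℕ) = 1 + 1 from rfl, hUsucc 1 le_rfl, hU1]; norm_num
      have hW2 : W 2 = 9 * g 2 := by
        rw [show (2:ℕ) = 1 + 1 from rfl, hWsucc 1 le_rfl, hW1, hSsucc 1 le_rfl, hS1]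
        norm_num
      simp only [show (2:ℕ) - 1 = 1 from rfl] at hA2
      rw [hU2] at hA2
      rw [hW2]
      norm_num at hA2 ⊢
      linarith
    | succ n hn ih =>
      have hA' := hA (n + 1) (by omega)
      simp only [Nat.add_sub_cancel] at hA'
      have key : (-(3 / 2) * d1) / 3 ^ n + W n / 3 ^ (n + 1)
          + (3 * d1 / 3 ^ (n + 1) + U (n + 1) / 3 ^ (n + 1 + 1))
          = (-(3 / 2) * d1) / 3 ^ (n + 1) + W (n + 1) / 3 ^ (n + 1 + 1) := by
        rw [hE n (by omega), hWsucc n (by omega)]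
        have h1 := (hpow n).ne'
        have h2 := (hpow (n + 1)).ne'
        have h3 := (hpow (n + 2)).ne'
        field_simp
        ring
      have : x (n + 1) ≤ x n + (3 * d1 / 3 ^ (n + 1) + U (n + 1) / 3 ^ (n + 1 + 1)) := by
        linarith
      calc x (n + 1) ≤ x n + (3 * d1 / 3 ^ (n + 1) + U (n + 1) / 3 ^ (n + 1 + 1)) := this
        _ ≤ (x 1 + d1 / 2) + (-(3 / 2) * d1) / 3 ^ n + W n / 3 ^ (n + 1)
              + (3 * d1 / 3 ^ (n + 1) + U (n + 1) / 3 ^ (n + 1 + 1)) := by linarith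
        _ = (x 1 + d1 / 2) + (-(3 / 2) * d1) / 3 ^ (n + 1) + W (n + 1) / 3 ^ (n + 1 + 1) := by
            rw [add_assoc ((x 1 + d1 / 2)), add_assoc ((x 1 + d1 / 2)), key]
            ring
  intro N hN
  have hsum : ∑ j ∈ Finset.Icc 2 N, (1 / 3 ^ (N + 1 - j)) * S j = W N / 3 ^ (N + 1) := by
    simp only [hW, Finset.sum_div]
    apply Finset.sum_congr rfl
    intro j hj
    have hjN : j ≤ N := (Finset.mem_Icc.mp hj).2
    have hkey : (3:ℝ) ^ (N + 1 - j) * 3 ^ j = 3 ^ (N + 1) := by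
      rw [← pow_add, Nat.sub_add_cancel (by omega)]
    have h1 := (hpow (N + 1 - j)).ne'
    have h2 := (hpow (N + 1)).ne'
    field_simp
    linear_combination (-(S j)) * hkey
  rw [show (∑ j ∈ Finset.Icc 2 N, (1 / 3 ^ (N + 1 - j)) * ∑ k ∈ Finset.Icc 2 j, g k)
      = ∑ j ∈ Finset.Icc 2 N, (1 / 3 ^ (N + 1 - j)) * S j from rfl, hsum]
  exact hP N hN
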